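/- For any two cliques S₁, S₂ of a preference network, either S₁ ⊆ S₂, or S₂ ⊆ S₁, or S₁ ∩ S₂ = ∅. -/

import Mathlib

open Finset

variable {α : Type*} [DecidableEq α]

/-- `GroupPrefers r A B`: under ranking `r` (smaller rank = more preferred), the set `A`
is group-preferred to `B`: there is an injection `f` from `B` into `A` such that each
`f b` is strictly preferred to `b`.  (When `|A| = |B|` this is a bijection.) -/
def GroupPrefers (r : α → ℕ) (A B : Finset α) : Prop :=
  ∃ f : α → α, Set.InjOn f ↑B ∧ (∀ b ∈ B, f b ∈ A) ∧ ∀ b ∈ B, r (f b) < r b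

/-- The top-`k` elements of `A` under the ranking `r`. -/
def topk (r : α → ℕ) (k : ℕ) (A : Finset α) : Finset α :=
  A.filter fun a => (A.filter fun b => r b < r a).card < k

/-- `WeakPrefers r A B`: `r` weakly prefers `A` to `B`, i.e. with `k = min(|A|,|B|)`,
the top-`k` elements of `A` are group-preferred to the top-`k` elements of `B`
(and `A` is nonempty whenever `B` is). -/
def WeakPrefers (r : α → ℕ) (A B : Finset α) : Prop :=
  (B.Nonempty → A.Nonempty) ∧
  GroupPrefers r (topk r (min A.card B.card) A) (topk r (min A.card B.card) B)

/-- `P` is a preference profile on `V`: each individual's ranking is a total (strict)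
order on `V`, i.e. injective on `V`. -/
def IsProfile (V : Finset α) (P : α → α → ℕ) : Prop :=
  ∀ u ∈ V, Set.InjOn (P u) ↑V

/-- `S` is self-approving w.r.t. the profile `P` on `V`. -/
def SelfApproving (V : Finset α) (P : α → α → ℕ) (S : Finset α) : Prop :=
  ∀ S' ⊆ V \ S, S'.card = S.card → ∃ s ∈ S, ¬ GroupPrefers (P s) S' S

/-- `S` is group-stable w.r.t. the profile `P` on `V`. -/
def GroupStable (V : Finset α) (P : α → α → ℕ) (S : Finset α) : Prop :=
  ∀ G, G ⊂ S → G.Nonempty → ∀ G' ⊆ V \ S, G'.card = G.card →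
    ∃ s ∈ S \ G, ¬ GroupPrefers (P s) G' G

/-- `S` is strongly group-stable w.r.t. the profile `P` on `V`. -/
def StronglyGroupStable (V : Finset α) (P : α → α → ℕ) (S : Finset α) : Prop :=
  ∀ G, G ⊂ S → G.Nonempty → ∃ s ∈ S \ G, ¬ WeakPrefers (P s) (V \ S) G

/-- `s` ranks itself first (π_s(s) = 1). -/
def RanksSelfFirst (V : Finset α) (P : α → α → ℕ) (s : α) : Prop :=
  ∀ v ∈ V, v ≠ s → P s s < P s v

/-- Membership in `C_scomp`: strongly group-stable, and a singleton `{s}` must rank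
itself first. -/
def CscompMem (V : Finset α) (P : α → α → ℕ) (S : Finset α) : Prop :=
  S ⊆ V ∧ StronglyGroupStable V P S ∧ ∀ s, S = {s} → RanksSelfFirst V P s

/-- A (nonempty) clique of a preference network: every member prefers every member
to every non-member. -/
def IsClique (V : Finset α) (P : α → α → ℕ) (S : Finset α) : Prop :=
  S.Nonempty ∧ S ⊆ V ∧ ∀ u ∈ S, ∀ v ∈ S, ∀ w ∈ V \ S, P u v < P u w

/-- A community function maps each preference network `(V, P)` to a collection of
subsets of `V`. -/
abbrev CommunityFun (α : Type*) := Finset α → (α → α → ℕ) → Set (Finset α)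

/-- Axiom GS: every (nonempty) community is group-stable. -/
def SatisfiesGS (C : CommunityFun α) : Prop :=
  ∀ (V : Finset α) (P : α → α → ℕ), IsProfile V P →
    ∀ S ∈ C V P, S ⊆ V → S.Nonempty → GroupStable V P S

/-- Axiom SGS: every (nonempty) community is strongly group-stable. -/
def SatisfiesSGS (C : CommunityFun α) : Prop :=
  ∀ (V : Finset α) (P : α → α → ℕ), IsProfile V P →
    ∀ S ∈ C V P, S ⊆ V → S.Nonempty → StronglyGroupStable V P S

/-- Axiom SA: every (nonempty) community is self-approving. -/
def SatisfiesSA (C : CommunityFun α) : Prop :=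
  ∀ (V : Finset α) (P : α → α → ℕ), IsProfile V P →
    ∀ S ∈ C V P, S ⊆ V → S.Nonempty → SelfApproving V P S

/-- Axiom SA': every singleton community ranks itself first. -/
def SatisfiesSA' (C : CommunityFun α) : Prop :=
  ∀ (V : Finset α) (P : α → α → ℕ), IsProfile V P →
    ∀ s ∈ V, {s} ∈ C V P → RanksSelfFirst V P s

/-- Axiom Mon (monotonicity). -/
def SatisfiesMon (C : CommunityFun α) : Prop :=
  ∀ (V : Finset α) (P P' : α → α → ℕ), IsProfile V P → IsProfile V P' →
    ∀ S ⊆ V, (∀ s ∈ S, ∀ u ∈ S, ∀ v ∈ V, P s u < P s v → P' s u < P' s v) →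
      S ∈ C V P → S ∈ C V P'

/-- Axiom WC (world community). -/
def SatisfiesWC (C : CommunityFun α) : Prop :=
  ∀ (V : Finset α) (P : α → α → ℕ), IsProfile V P → V ∈ C V P

/-- Axiom A (anonymity). -/
def SatisfiesA (C : CommunityFun α) : Prop :=
  ∀ (V : Finset α) (P P' : α → α → ℕ) (σ : α ≃ α), IsProfile V P → IsProfile V P' →
    (∀ v ∈ V, σ v ∈ V) → (∀ u ∈ V, ∀ v ∈ V, P' (σ u) (σ v) = P u v) →
    ∀ S ⊆ V, (S ∈ C V P ↔ S.image σ ∈ C V P')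

/-- Axiom Emb (embedding). -/
def SatisfiesEmb (C : CommunityFun α) : Prop :=
  ∀ (V V' : Finset α) (P P' : α → α → ℕ), IsProfile V P → IsProfile V' P' → V' ⊆ V →
    (∀ u ∈ V', ∀ v ∈ V', ∀ w ∈ V', (P' u v < P' u w ↔ P u v < P u w)) →
    C V' P' = C V P ∩ {S : Finset α | S ⊆ V'}

/-- any two cliques are nested or disjoint. -/
theorem stmt5 (V S₁ S₂ : Finset α) (P : α → α → ℕ) (hP : IsProfile V P)
    (h1 : IsClique V P S₁) (h2 : IsClique V P S₂) :
    S₁ ⊆ S₂ ∨ S₂ ⊆ S₁ ∨ S₁ ∩ S₂ = ∅ := by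
  by_contra h
  push_neg at h
  obtain ⟨hn1, hn2, hn3⟩ := h
  obtain ⟨a, ha1, ha2⟩ := Finset.not_subset.mp hn1
  obtain ⟨b, hb2, hb1⟩ := Finset.not_subset.mp hn2
  obtain ⟨c, hc⟩ := hn3
  rw [Finset.mem_inter] at hc
  obtain ⟨_, hsub1, hcl1⟩ := h1
  obtain ⟨_, hsub2, hcl2⟩ := h2
  have h1' : P c a < P c b := hcl1 c hc.1 a ha1 b (Finset.mem_sdiff.mpr ⟨hsub2 hb2, hb1⟩)
  have h2' : P c b < P c a := hcl2 c hc.2 b hb2 a (Finset.mem_sdiff.mpr ⟨hsub1 ha1, ha2⟩)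
  omega
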